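/- Let B = M₂(ℝ), and for b ∈ B write b^ι := tr(b)·1 − b (so b·b^ι = det(b)·1). Fix a real number Δ < 0 and an element j ∈ B with tr(j) = 0 and j² = Δ·1 (so det(j) = |Δ|). Define the ℂ-valued pairing h(x,y) := (Δ/2)·tr(x·y^ι) + (i·|Δ|^{1/2}/2)·tr(j·x·y^ι) for x, y ∈ B; note h(x,x) = Δ·det(x) is real. For z = x₀ + i·y₀ in the upper half-plane (y₀ > 0), let J_z := (1/y₀)·[[x₀, −x₀² − y₀²],[1, −x₀]]. For a traceless v ∈ B set v_ζ := v − (tr(v·J_z^ι)/2)·J_z and R^o(v,z) := −2·det(v_ζ). Now let t be a nonzero real number, y ∈ GL₂(ℝ), and x := t·y^{−1}·j·y (which is traceless). Then for every z in the upper half-plane and every nonzero w ∈ B satisfying w·J_z = −|Δ|^{−1/2}·j·w and h(w,w) ≠ 0, one has: R^o(x,z) + 2·det(x) = (2·t²/(|Δ|·det(y)²)) · ( −2·|h(y,w)|²/h(w,w) + Δ·det(y) )². -/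

import Mathlib

open Matrix

/-- The main involution `b ↦ b^ι = tr(b)·1 - b` on `M₂(ℝ)`. -/
noncomputable def invol (b : Matrix (Fin 2) (Fin 2) ℝ) : Matrix (Fin 2) (Fin 2) ℝ :=
  (Matrix.trace b) • (1 : Matrix (Fin 2) (Fin 2) ℝ) - b

/-- The matrix `J_z` attached to a point `z = x₀ + i y₀` of the upper half-plane. -/
noncomputable def Jmat (x₀ y₀ : ℝ) : Matrix (Fin 2) (Fin 2) ℝ :=
  (1 / y₀) • !![x₀, -x₀ ^ 2 - y₀ ^ 2; 1, -x₀]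

/-- The hermitian pairing
`h(x,y) = (Δ/2)·tr(x·y^ι) + (i·|Δ|^{1/2}/2)·tr(j·x·y^ι)`. -/
noncomputable def hform (Δ : ℝ) (j : Matrix (Fin 2) (Fin 2) ℝ)
    (x y : Matrix (Fin 2) (Fin 2) ℝ) : ℂ :=
  ((Δ / 2) * Matrix.trace (x * invol y) : ℝ)
    + Complex.I * ((Real.sqrt |Δ| / 2) * Matrix.trace (j * x * invol y) : ℝ)

/-- The orthogonal majorant `R^o(v,z) = -2·det(v_ζ)`, where
`v_ζ = v - (tr(v·J_z^ι)/2)·J_z`. -/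
noncomputable def Ro (x₀ y₀ : ℝ) (v : Matrix (Fin 2) (Fin 2) ℝ) : ℝ :=
  -2 * Matrix.det (v - (Matrix.trace (v * invol (Jmat x₀ y₀)) / 2) • Jmat x₀ y₀)

set_option maxHeartbeats 4000000 in
/-- The majorant comparison lemma: for `x = t·y⁻¹·j·y`,
`R^o(x,z) + 2·det(x) = (2t²/(|Δ|·det(y)²))·(R_φ(y,z) + Δ·det(y))²`,
where `R_φ(y,z) = -2|h(y,w)|²/h(w,w)` for any nonzero `w` spanning the line attached
to `z` (i.e. `w·J_z = -|Δ|^{-1/2}·j·w`) with `h(w,w) ≠ 0`. -/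
theorem majorant_comparison (Δ : ℝ) (hΔ : Δ < 0)
    (j : Matrix (Fin 2) (Fin 2) ℝ) (hjtr : Matrix.trace j = 0)
    (hjsq : j * j = Δ • (1 : Matrix (Fin 2) (Fin 2) ℝ))
    (t : ℝ) (ht : t ≠ 0)
    (y : Matrix (Fin 2) (Fin 2) ℝ) (hy : Matrix.det y ≠ 0)
    (x₀ y₀ : ℝ) (hy₀ : 0 < y₀)
    (w : Matrix (Fin 2) (Fin 2) ℝ) (hw : w ≠ 0)
    (hweq : w * Jmat x₀ y₀ = (-(Real.sqrt |Δ|)⁻¹) • (j * w))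
    (hwh : hform Δ j w w ≠ 0) :
    ((Ro x₀ y₀ (t • (y⁻¹ * j * y)) + 2 * Matrix.det (t • (y⁻¹ * j * y)) : ℝ) : ℂ)
      = ((2 * t ^ 2 / (|Δ| * Matrix.det y ^ 2) : ℝ) : ℂ)
        * (-2 * ((‖hform Δ j y w‖ : ℝ) : ℂ) ^ 2 / hform Δ j w w
            + ((Δ * Matrix.det y : ℝ) : ℂ)) ^ 2 := by
  set s := Real.sqrt |Δ| with hsdef
  have hΔ' : |Δ| = -Δ := abs_of_neg hΔ
  have hs2 : s ^ 2 = -Δ := by rw [hsdef, Real.sq_sqrt (abs_nonneg Δ), hΔ']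
  have hs0 : (0:ℝ) < s := by rw [hsdef]; exact Real.sqrt_pos.2 (abs_pos.2 hΔ.ne)
  have hy₀' : y₀ ≠ 0 := hy₀.ne'
  have hq : (j 0 0)^2 + (j 0 1) * (j 1 0) = Δ := by
    have h := congr_fun (congr_fun hjsq 0) 0
    simp [Matrix.mul_apply, Fin.sum_univ_two, Matrix.smul_apply, Matrix.one_apply] at h
    linear_combination h
  have hj11 : j 1 1 = -(j 0 0) := by
    have h := hjtr; rw [Matrix.trace_fin_two] at h; linarith
  have hb : j 0 1 ≠ 0 := by
    intro h0; rw [h0] at hq; nlinarith [sq_nonneg (j 0 0)]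
  have hE1 : s*(w 0 1) + s*x₀*(w 0 0) + (j 0 1)*y₀*(w 1 0) + (j 0 0)*y₀*(w 0 0) = 0 := by
    have h := congr_fun (congr_fun hweq 0) 0
    simp [Jmat, Matrix.mul_apply, Fin.sum_univ_two, Matrix.smul_apply] at h
    field_simp at h
    linear_combination h
  have hE2 : (-1)*s*y₀^2*(w 0 0) + (-1)*s*x₀*(w 0 1) + (-1)*s*x₀^2*(w 0 0)
      + (j 0 1)*y₀*(w 1 1) + (j 0 0)*y₀*(w 0 1) = 0 := by
    have h := congr_fun (congr_fun hweq 0) 1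
    simp [Jmat, Matrix.mul_apply, Fin.sum_univ_two, Matrix.smul_apply] at h
    field_simp at h
    linear_combination h
  -- h(w,w) = Δ · det w
  have hww : hform Δ j w w = ((Δ * Matrix.det w : ℝ) : ℂ) := by
    unfold hform
    have h1 : Matrix.trace (w * invol w) = 2 * Matrix.det w := by
      unfold invol
      simp [Matrix.trace_fin_two, Matrix.mul_apply, Fin.sum_univ_two, Matrix.smul_apply,
        Matrix.sub_apply, Matrix.one_apply, Matrix.det_fin_two]
      ring
    have h2 : Matrix.trace (j * w * invol w) = 0 := by
      unfold invol
      simp [Matrix.trace_fin_two, Matrix.mul_apply, Fin.sum_univ_two, Matrix.smul_apply,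
        Matrix.sub_apply, Matrix.one_apply]
      linear_combination (w 0 0 * w 1 1 - w 0 1 * w 1 0) * hj11
    rw [h1, h2]
    push_cast
    ring
  have hΔD : Δ * Matrix.det w ≠ 0 := by
    intro hcon
    exact hwh (by rw [hww, hcon]; norm_num)
  -- h(y,w) = A + B i
  have hAr : Matrix.trace (y * invol w) = ((w 1 1)*(y 0 0) + (-1)*(w 1 0)*(y 0 1) + (-1)*(w 0 1)*(y 1 0) + (w 0 0)*(y 1 1)) := by
    unfold invol
    simp [Matrix.trace_fin_two, Matrix.mul_apply, Fin.sum_univ_two, Matrix.smul_apply,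
      Matrix.sub_apply, Matrix.one_apply]
    ring
  have hBr : Matrix.trace (j * y * invol w) = ((-1)*(j 1 0)*(w 0 1)*(y 0 0) + (j 1 0)*(w 0 0)*(y 0 1) + (j 0 1)*(w 1 1)*(y 1 0) + (-1)*(j 0 1)*(w 1 0)*(y 1 1) + (j 0 0)*(w 1 1)*(y 0 0) + (-1)*(j 0 0)*(w 1 0)*(y 0 1) + (j 0 0)*(w 0 1)*(y 1 0) + (-1)*(j 0 0)*(w 0 0)*(y 1 1)) := by
    unfold invol
    simp [Matrix.trace_fin_two, Matrix.mul_apply, Fin.sum_univ_two, Matrix.smul_apply,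
      Matrix.sub_apply, Matrix.one_apply]
    linear_combination (-(w 0 1)*(y 1 0) + (w 0 0)*(y 1 1)) * hj11
  have hyw : hform Δ j y w = ((Δ/2 * ((w 1 1)*(y 0 0) + (-1)*(w 1 0)*(y 0 1) + (-1)*(w 0 1)*(y 1 0) + (w 0 0)*(y 1 1)) : ℝ) : ℂ) + ((s/2 * ((-1)*(j 1 0)*(w 0 1)*(y 0 0) + (j 1 0)*(w 0 0)*(y 0 1) + (j 0 1)*(w 1 1)*(y 1 0) + (-1)*(j 0 1)*(w 1 0)*(y 1 1) + (j 0 0)*(w 1 1)*(y 0 0) + (-1)*(j 0 0)*(w 1 0)*(y 0 1) + (j 0 0)*(w 0 1)*(y 1 0) + (-1)*(j 0 0)*(w 0 0)*(y 1 1)) : ℝ) : ℂ) * Complex.I := by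
    unfold hform
    rw [hAr, hBr]
    push_cast
    ring
  have habs2 : (‖hform Δ j y w‖)^2 = (Δ/2 * ((w 1 1)*(y 0 0) + (-1)*(w 1 0)*(y 0 1) + (-1)*(w 0 1)*(y 1 0) + (w 0 0)*(y 1 1)))^2 + (s/2 * ((-1)*(j 1 0)*(w 0 1)*(y 0 0) + (j 1 0)*(w 0 0)*(y 0 1) + (j 0 1)*(w 1 1)*(y 1 0) + (-1)*(j 0 1)*(w 1 0)*(y 1 1) + (j 0 0)*(w 1 1)*(y 0 0) + (-1)*(j 0 0)*(w 1 0)*(y 0 1) + (j 0 0)*(w 0 1)*(y 1 0) + (-1)*(j 0 0)*(w 0 0)*(y 1 1)))^2 := by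
    rw [Complex.sq_norm, hyw, Complex.normSq_add_mul_I]
  -- the key identity
  have key : -2*((Δ/2 * ((w 1 1)*(y 0 0) + (-1)*(w 1 0)*(y 0 1) + (-1)*(w 0 1)*(y 1 0) + (w 0 0)*(y 1 1)))^2 + (s/2 * ((-1)*(j 1 0)*(w 0 1)*(y 0 0) + (j 1 0)*(w 0 0)*(y 0 1) + (j 0 1)*(w 1 1)*(y 1 0) + (-1)*(j 0 1)*(w 1 0)*(y 1 1) + (j 0 0)*(w 1 1)*(y 0 0) + (-1)*(j 0 0)*(w 1 0)*(y 0 1) + (j 0 0)*(w 0 1)*(y 1 0) + (-1)*(j 0 0)*(w 0 0)*(y 1 1)))^2)/(Δ * Matrix.det w) + Δ * Matrix.det y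
      = s * ((-1)*(j 1 0)*(y 0 1)^2 + (-1)*(j 1 0)*y₀^2*(y 0 0)^2 + (-2)*(j 1 0)*x₀*(y 0 0)*(y 0 1) + (-1)*(j 1 0)*x₀^2*(y 0 0)^2 + (j 0 1)*(y 1 1)^2 + (j 0 1)*y₀^2*(y 1 0)^2 + (2)*(j 0 1)*x₀*(y 1 0)*(y 1 1) + (j 0 1)*x₀^2*(y 1 0)^2 + (2)*(j 0 0)*(y 0 1)*(y 1 1) + (2)*(j 0 0)*y₀^2*(y 0 0)*(y 1 0) + (2)*(j 0 0)*x₀*(y 0 1)*(y 1 0) + (2)*(j 0 0)*x₀*(y 0 0)*(y 1 1) + (2)*(j 0 0)*x₀^2*(y 0 0)*(y 1 0)) / (2*y₀) := by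
    rw [Matrix.det_fin_two w] at hΔD ⊢
    rw [Matrix.det_fin_two y]
    rw [div_add' _ _ _ hΔD, div_eq_div_iff hΔD (by positivity)]
    apply mul_left_cancel₀ (show ((j 0 1)*y₀)^2 ≠ 0 from pow_ne_zero _ (mul_ne_zero hb hy₀'))
    linear_combination (((j 0 1)^2*s^3*y₀*(w 0 1)*(y 1 1)^2 + (j 0 1)^2*s^3*x₀*y₀*(w 0 0)*(y 1 1)^2 + (-2)*(j 0 1)^2*(j 1 0)*s^2*y₀^2*(w 0 1)*(y 0 0)*(y 1 1) + (2)*(j 0 1)^2*(j 1 0)*s^2*y₀^2*(w 0 0)*(y 0 1)*(y 1 1) + (2)*(j 0 1)^3*s^2*y₀^2*(w 1 1)*(y 1 0)*(y 1 1) + (-1)*(j 0 1)^3*s^2*y₀^2*(w 1 0)*(y 1 1)^2 + (2)*(j 0 0)*(j 0 1)*s^3*y₀*(w 0 1)*(y 0 1)*(y 1 1) + (2)*(j 0 0)*(j 0 1)*s^3*x₀*y₀*(w 0 0)*(y 0 1)*(y 1 1) + (-2)*(j 0 0)*(j 0 1)*(j 1 0)*s^2*y₀^2*(w 0 1)*(y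 0 0)*(y 0 1) + (2)*(j 0 0)*(j 0 1)*(j 1 0)*s^2*y₀^2*(w 0 0)*(y 0 1)^2 + (2)*(j 0 0)*(j 0 1)^2*s^2*y₀^2*(w 1 1)*(y 0 1)*(y 1 0) + (2)*(j 0 0)*(j 0 1)^2*s^2*y₀^2*(w 1 1)*(y 0 0)*(y 1 1) + (-2)*(j 0 0)*(j 0 1)^2*s^2*y₀^2*(w 1 0)*(y 0 1)*(y 1 1) + (2)*(j 0 0)*(j 0 1)^2*s^2*y₀^2*(w 0 1)*(y 1 0)*(y 1 1) + (-1)*(j 0 0)*(j 0 1)^2*s^2*y₀^2*(w 0 0)*(y 1 1)^2 + (j 0 0)^2*s^3*y₀*(w 0 1)*(y 0 1)^2 + (j 0 0)^2*s^3*x₀*y₀*(w 0 0)*(y 0 1)^2 + (2)*(j 0 0)^2*(j 0 1)*s^2*y₀^2*(w 1 1)*(y 0 0)*(y 0 1) + (-1)*(j 0 0)^2*(j 0 1)*s^2*y₀^2*(w 1 0)*(y 0 1)^2 + (2)*(j 0 0)^2*(j 0 1)*s^2*y₀^2*(w 0 1)*(y 0 1)*(y 1 0) + (j 0 0)^3*s^2*y₀^2*(w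 0 0)*(y 0 1)^2 + (-1)*Δ*(j 0 1)*(j 1 0)*s*y₀*(w 0 1)*(y 0 1)^2 + (-1)*Δ*(j 0 1)*(j 1 0)*s*y₀^3*(w 0 1)*(y 0 0)^2 + (-2)*Δ*(j 0 1)*(j 1 0)*s*x₀*y₀*(w 0 1)*(y 0 0)*(y 0 1) + (-1)*Δ*(j 0 1)*(j 1 0)*s*x₀^2*y₀*(w 0 1)*(y 0 0)^2 + Δ*(j 0 1)^2*s*y₀*(w 0 1)*(y 1 1)^2 + Δ*(j 0 1)^2*s*y₀^3*(w 0 1)*(y 1 0)^2 + (2)*Δ*(j 0 1)^2*s*x₀*y₀*(w 0 1)*(y 1 0)*(y 1 1) + Δ*(j 0 1)^2*s*x₀^2*y₀*(w 0 1)*(y 1 0)^2 + (2)*Δ*(j 0 0)*(j 0 1)*s*y₀*(w 0 1)*(y 0 1)*(y 1 1) + (2)*Δ*(j 0 0)*(j 0 1)*s*y₀^3*(w 0 1)*(y 0 0)*(y 1 0) + (2)*Δ*(j 0 0)*(j 0 1)*s*x₀*y₀*(w 0 1)*(y 0 1)*(y 1 0) + (2)*Δ*(j 0 0)*(j 0 1)*s*x₀*y₀*(w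 0 1)*(y 0 0)*(y 1 1) + (2)*Δ*(j 0 0)*(j 0 1)*s*x₀^2*y₀*(w 0 1)*(y 0 0)*(y 1 0) + Δ^2*s*y₀*(w 0 1)*(y 0 1)^2 + Δ^2*s*x₀*y₀*(w 0 0)*(y 0 1)^2 + (2)*Δ^2*(j 0 1)*y₀^2*(w 1 1)*(y 0 0)*(y 0 1) + (-1)*Δ^2*(j 0 1)*y₀^2*(w 1 0)*(y 0 1)^2 + (-2)*Δ^2*(j 0 1)*y₀^2*(w 0 1)*(y 0 0)*(y 1 1) + (2)*Δ^2*(j 0 1)*y₀^2*(w 0 0)*(y 0 1)*(y 1 1) + Δ^2*(j 0 0)*y₀^2*(w 0 0)*(y 0 1)^2)) * hE1 + (((-2)*(j 0 1)^2*s^3*y₀*(w 0 1)*(y 1 0)*(y 1 1) + (-1)*(j 0 1)^2*s^3*y₀^3*(w 0 0)*(y 1 0)^2 + (-1)*(j 0 1)^2*s^3*x₀*y₀*(w 0 1)*(y 1 0)^2 + (-2)*(j 0 1)^2*s^3*x₀*y₀*(w 0 0)*(y 1 0)*(y 1 1) + (-1)*(j 0 1)^2*s^3*x₀^2*y₀*(w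 0 0)*(y 1 0)^2 + (2)*(j 0 1)^2*(j 1 0)*s^2*y₀^2*(w 0 1)*(y 0 0)*(y 1 0) + (-2)*(j 0 1)^2*(j 1 0)*s^2*y₀^2*(w 0 0)*(y 0 1)*(y 1 0) + (-1)*(j 0 1)^3*s^2*y₀^2*(w 1 1)*(y 1 0)^2 + (-2)*(j 0 0)*(j 0 1)*s^3*y₀*(w 0 1)*(y 0 1)*(y 1 0) + (-2)*(j 0 0)*(j 0 1)*s^3*y₀*(w 0 1)*(y 0 0)*(y 1 1) + (-2)*(j 0 0)*(j 0 1)*s^3*y₀^3*(w 0 0)*(y 0 0)*(y 1 0) + (-2)*(j 0 0)*(j 0 1)*s^3*x₀*y₀*(w 0 1)*(y 0 0)*(y 1 0) + (-2)*(j 0 0)*(j 0 1)*s^3*x₀*y₀*(w 0 0)*(y 0 1)*(y 1 0) + (-2)*(j 0 0)*(j 0 1)*s^3*x₀*y₀*(w 0 0)*(y 0 0)*(y 1 1) + (-2)*(j 0 0)*(j 0 1)*s^3*x₀^2*y₀*(w 0 0)*(y 0 0)*(y 1 0) + (2)*(j 0 0)*(j 0 1)*(j 1 0)*s^2*y₀^2*(w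 0 1)*(y 0 0)^2 + (-2)*(j 0 0)*(j 0 1)*(j 1 0)*s^2*y₀^2*(w 0 0)*(y 0 0)*(y 0 1) + (-2)*(j 0 0)*(j 0 1)^2*s^2*y₀^2*(w 1 1)*(y 0 0)*(y 1 0) + (-1)*(j 0 0)*(j 0 1)^2*s^2*y₀^2*(w 0 1)*(y 1 0)^2 + (-2)*(j 0 0)^2*s^3*y₀*(w 0 1)*(y 0 0)*(y 0 1) + (-1)*(j 0 0)^2*s^3*y₀^3*(w 0 0)*(y 0 0)^2 + (-1)*(j 0 0)^2*s^3*x₀*y₀*(w 0 1)*(y 0 0)^2 + (-2)*(j 0 0)^2*s^3*x₀*y₀*(w 0 0)*(y 0 0)*(y 0 1) + (-1)*(j 0 0)^2*s^3*x₀^2*y₀*(w 0 0)*(y 0 0)^2 + (-1)*(j 0 0)^2*(j 0 1)*s^2*y₀^2*(w 1 1)*(y 0 0)^2 + (-2)*(j 0 0)^2*(j 0 1)*s^2*y₀^2*(w 0 0)*(y 0 1)*(y 1 0) + (j 0 0)^3*s^2*y₀^2*(w 0 1)*(y 0 0)^2 + (-2)*(j 0 0)^3*s^2*y₀^2*(w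 0 0)*(y 0 0)*(y 0 1) + Δ*(j 0 1)*(j 1 0)*s*y₀*(w 0 0)*(y 0 1)^2 + Δ*(j 0 1)*(j 1 0)*s*y₀^3*(w 0 0)*(y 0 0)^2 + (2)*Δ*(j 0 1)*(j 1 0)*s*x₀*y₀*(w 0 0)*(y 0 0)*(y 0 1) + Δ*(j 0 1)*(j 1 0)*s*x₀^2*y₀*(w 0 0)*(y 0 0)^2 + (-1)*Δ*(j 0 1)^2*s*y₀*(w 0 0)*(y 1 1)^2 + (-1)*Δ*(j 0 1)^2*s*y₀^3*(w 0 0)*(y 1 0)^2 + (-2)*Δ*(j 0 1)^2*s*x₀*y₀*(w 0 0)*(y 1 0)*(y 1 1) + (-1)*Δ*(j 0 1)^2*s*x₀^2*y₀*(w 0 0)*(y 1 0)^2 + (-2)*Δ*(j 0 0)*(j 0 1)*s*y₀*(w 0 0)*(y 0 1)*(y 1 1) + (-2)*Δ*(j 0 0)*(j 0 1)*s*y₀^3*(w 0 0)*(y 0 0)*(y 1 0) + (-2)*Δ*(j 0 0)*(j 0 1)*s*x₀*y₀*(w 0 0)*(y 0 1)*(y 1 0) + (-2)*Δ*(j 0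 0)*(j 0 1)*s*x₀*y₀*(w 0 0)*(y 0 0)*(y 1 1) + (-2)*Δ*(j 0 0)*(j 0 1)*s*x₀^2*y₀*(w 0 0)*(y 0 0)*(y 1 0) + (-2)*Δ^2*s*y₀*(w 0 1)*(y 0 0)*(y 0 1) + (-1)*Δ^2*s*y₀^3*(w 0 0)*(y 0 0)^2 + (-1)*Δ^2*s*x₀*y₀*(w 0 1)*(y 0 0)^2 + (-2)*Δ^2*s*x₀*y₀*(w 0 0)*(y 0 0)*(y 0 1) + (-1)*Δ^2*s*x₀^2*y₀*(w 0 0)*(y 0 0)^2 + (-1)*Δ^2*(j 0 1)*y₀^2*(w 1 1)*(y 0 0)^2 + (2)*Δ^2*(j 0 1)*y₀^2*(w 0 1)*(y 0 0)*(y 1 0) + (-2)*Δ^2*(j 0 1)*y₀^2*(w 0 0)*(y 0 1)*(y 1 0) + Δ^2*(j 0 0)*y₀^2*(w 0 1)*(y 0 0)^2 + (-2)*Δ^2*(j 0 0)*y₀^2*(w 0 0)*(y 0 0)*(y 0 1))) * hE2 + (((-1)*(j 0 1)^2*s^2*y₀*(w 0 1)^2*(y 1 1)^2 + (-2)*(j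 0 1)^2*s^2*y₀^3*(w 0 0)*(w 0 1)*(y 1 0)*(y 1 1) + (-1)*(j 0 1)^2*s^2*y₀^5*(w 0 0)^2*(y 1 0)^2 + (-2)*(j 0 1)^2*s^2*x₀*y₀*(w 0 1)^2*(y 1 0)*(y 1 1) + (-2)*(j 0 1)^2*s^2*x₀*y₀*(w 0 0)*(w 0 1)*(y 1 1)^2 + (-2)*(j 0 1)^2*s^2*x₀*y₀^3*(w 0 0)*(w 0 1)*(y 1 0)^2 + (-2)*(j 0 1)^2*s^2*x₀*y₀^3*(w 0 0)^2*(y 1 0)*(y 1 1) + (-1)*(j 0 1)^2*s^2*x₀^2*y₀*(w 0 1)^2*(y 1 0)^2 + (-4)*(j 0 1)^2*s^2*x₀^2*y₀*(w 0 0)*(w 0 1)*(y 1 0)*(y 1 1) + (-1)*(j 0 1)^2*s^2*x₀^2*y₀*(w 0 0)^2*(y 1 1)^2 + (-2)*(j 0 1)^2*s^2*x₀^2*y₀^3*(w 0 0)^2*(y 1 0)^2 + (-2)*(j 0 1)^2*s^2*x₀^3*y₀*(w 0 0)*(w 0 1)*(y 1 0)^2 + (-2)*(j 0 1)^2*s^2*x₀^3*y₀*(w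 0 0)^2*(y 1 0)*(y 1 1) + (-1)*(j 0 1)^2*s^2*x₀^4*y₀*(w 0 0)^2*(y 1 0)^2 + (2)*(j 0 1)^2*(j 1 0)*s*y₀^2*(w 0 1)^2*(y 0 0)*(y 1 1) + (-2)*(j 0 1)^2*(j 1 0)*s*y₀^2*(w 0 0)*(w 0 1)*(y 0 1)*(y 1 1) + (2)*(j 0 1)^2*(j 1 0)*s*y₀^4*(w 0 0)*(w 0 1)*(y 0 0)*(y 1 0) + (-2)*(j 0 1)^2*(j 1 0)*s*y₀^4*(w 0 0)^2*(y 0 1)*(y 1 0) + (2)*(j 0 1)^2*(j 1 0)*s*x₀*y₀^2*(w 0 1)^2*(y 0 0)*(y 1 0) + (-2)*(j 0 1)^2*(j 1 0)*s*x₀*y₀^2*(w 0 0)*(w 0 1)*(y 0 1)*(y 1 0) + (2)*(j 0 1)^2*(j 1 0)*s*x₀*y₀^2*(w 0 0)*(w 0 1)*(y 0 0)*(y 1 1) + (-2)*(j 0 1)^2*(j 1 0)*s*x₀*y₀^2*(w 0 0)^2*(y 0 1)*(y 1 1) + (2)*(j 0 1)^2*(j 1 0)*s*x₀^2*y₀^2*(w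 0 0)*(w 0 1)*(y 0 0)*(y 1 0) + (-2)*(j 0 1)^2*(j 1 0)*s*x₀^2*y₀^2*(w 0 0)^2*(y 0 1)*(y 1 0) + (-1)*(j 0 1)^2*(j 1 0)^2*y₀^3*(w 0 1)^2*(y 0 0)^2 + (2)*(j 0 1)^2*(j 1 0)^2*y₀^3*(w 0 0)*(w 0 1)*(y 0 0)*(y 0 1) + (-1)*(j 0 1)^2*(j 1 0)^2*y₀^3*(w 0 0)^2*(y 0 1)^2 + (-2)*(j 0 0)*(j 0 1)*s^2*y₀*(w 0 1)^2*(y 0 1)*(y 1 1) + (-2)*(j 0 0)*(j 0 1)*s^2*y₀^3*(w 0 0)*(w 0 1)*(y 0 1)*(y 1 0) + (-2)*(j 0 0)*(j 0 1)*s^2*y₀^3*(w 0 0)*(w 0 1)*(y 0 0)*(y 1 1) + (-2)*(j 0 0)*(j 0 1)*s^2*y₀^5*(w 0 0)^2*(y 0 0)*(y 1 0) + (-2)*(j 0 0)*(j 0 1)*s^2*x₀*y₀*(w 0 1)^2*(y 0 1)*(y 1 0) + (-2)*(j 0 0)*(j 0 1)*s^2*x₀*y₀*(w 0 1)^2*(y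 0 0)*(y 1 1) + (-4)*(j 0 0)*(j 0 1)*s^2*x₀*y₀*(w 0 0)*(w 0 1)*(y 0 1)*(y 1 1) + (-4)*(j 0 0)*(j 0 1)*s^2*x₀*y₀^3*(w 0 0)*(w 0 1)*(y 0 0)*(y 1 0) + (-2)*(j 0 0)*(j 0 1)*s^2*x₀*y₀^3*(w 0 0)^2*(y 0 1)*(y 1 0) + (-2)*(j 0 0)*(j 0 1)*s^2*x₀*y₀^3*(w 0 0)^2*(y 0 0)*(y 1 1) + (-2)*(j 0 0)*(j 0 1)*s^2*x₀^2*y₀*(w 0 1)^2*(y 0 0)*(y 1 0) + (-4)*(j 0 0)*(j 0 1)*s^2*x₀^2*y₀*(w 0 0)*(w 0 1)*(y 0 1)*(y 1 0) + (-4)*(j 0 0)*(j 0 1)*s^2*x₀^2*y₀*(w 0 0)*(w 0 1)*(y 0 0)*(y 1 1) + (-2)*(j 0 0)*(j 0 1)*s^2*x₀^2*y₀*(w 0 0)^2*(y 0 1)*(y 1 1) + (-4)*(j 0 0)*(j 0 1)*s^2*x₀^2*y₀^3*(w 0 0)^2*(y 0 0)*(y 1 0) + (-4)*(j 0 0)*(j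 0 1)*s^2*x₀^3*y₀*(w 0 0)*(w 0 1)*(y 0 0)*(y 1 0) + (-2)*(j 0 0)*(j 0 1)*s^2*x₀^3*y₀*(w 0 0)^2*(y 0 1)*(y 1 0) + (-2)*(j 0 0)*(j 0 1)*s^2*x₀^3*y₀*(w 0 0)^2*(y 0 0)*(y 1 1) + (-2)*(j 0 0)*(j 0 1)*s^2*x₀^4*y₀*(w 0 0)^2*(y 0 0)*(y 1 0) + (2)*(j 0 0)*(j 0 1)*(j 1 0)*s*y₀^2*(w 0 1)^2*(y 0 0)*(y 0 1) + (-2)*(j 0 0)*(j 0 1)*(j 1 0)*s*y₀^2*(w 0 0)*(w 0 1)*(y 0 1)^2 + (2)*(j 0 0)*(j 0 1)*(j 1 0)*s*y₀^4*(w 0 0)*(w 0 1)*(y 0 0)^2 + (-2)*(j 0 0)*(j 0 1)*(j 1 0)*s*y₀^4*(w 0 0)^2*(y 0 0)*(y 0 1) + (2)*(j 0 0)*(j 0 1)*(j 1 0)*s*x₀*y₀^2*(w 0 1)^2*(y 0 0)^2 + (-2)*(j 0 0)*(j 0 1)*(j 1 0)*s*x₀*y₀^2*(w 0 0)^2*(y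 0 1)^2 + (2)*(j 0 0)*(j 0 1)*(j 1 0)*s*x₀^2*y₀^2*(w 0 0)*(w 0 1)*(y 0 0)^2 + (-2)*(j 0 0)*(j 0 1)*(j 1 0)*s*x₀^2*y₀^2*(w 0 0)^2*(y 0 0)*(y 0 1) + (-1)*(j 0 0)^2*s^2*y₀*(w 0 1)^2*(y 0 1)^2 + (-2)*(j 0 0)^2*s^2*y₀^3*(w 0 0)*(w 0 1)*(y 0 0)*(y 0 1) + (-1)*(j 0 0)^2*s^2*y₀^5*(w 0 0)^2*(y 0 0)^2 + (-2)*(j 0 0)^2*s^2*x₀*y₀*(w 0 1)^2*(y 0 0)*(y 0 1) + (-2)*(j 0 0)^2*s^2*x₀*y₀*(w 0 0)*(w 0 1)*(y 0 1)^2 + (-2)*(j 0 0)^2*s^2*x₀*y₀^3*(w 0 0)*(w 0 1)*(y 0 0)^2 + (-2)*(j 0 0)^2*s^2*x₀*y₀^3*(w 0 0)^2*(y 0 0)*(y 0 1) + (-1)*(j 0 0)^2*s^2*x₀^2*y₀*(w 0 1)^2*(y 0 0)^2 + (-4)*(j 0 0)^2*s^2*x₀^2*y₀*(w 0 0)*(w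 0 1)*(y 0 0)*(y 0 1) + (-1)*(j 0 0)^2*s^2*x₀^2*y₀*(w 0 0)^2*(y 0 1)^2 + (-2)*(j 0 0)^2*s^2*x₀^2*y₀^3*(w 0 0)^2*(y 0 0)^2 + (-2)*(j 0 0)^2*s^2*x₀^3*y₀*(w 0 0)*(w 0 1)*(y 0 0)^2 + (-2)*(j 0 0)^2*s^2*x₀^3*y₀*(w 0 0)^2*(y 0 0)*(y 0 1) + (-1)*(j 0 0)^2*s^2*x₀^4*y₀*(w 0 0)^2*(y 0 0)^2 + (2)*(j 0 0)^2*(j 0 1)*s*y₀^2*(w 0 1)^2*(y 0 0)*(y 1 1) + (-2)*(j 0 0)^2*(j 0 1)*s*y₀^2*(w 0 0)*(w 0 1)*(y 0 1)*(y 1 1) + (2)*(j 0 0)^2*(j 0 1)*s*y₀^4*(w 0 0)*(w 0 1)*(y 0 0)*(y 1 0) + (-2)*(j 0 0)^2*(j 0 1)*s*y₀^4*(w 0 0)^2*(y 0 1)*(y 1 0) + (2)*(j 0 0)^2*(j 0 1)*s*x₀*y₀^2*(w 0 1)^2*(y 0 0)*(y 1 0) + (-2)*(j 0 0)^2*(j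 0 1)*s*x₀*y₀^2*(w 0 0)*(w 0 1)*(y 0 1)*(y 1 0) + (2)*(j 0 0)^2*(j 0 1)*s*x₀*y₀^2*(w 0 0)*(w 0 1)*(y 0 0)*(y 1 1) + (-2)*(j 0 0)^2*(j 0 1)*s*x₀*y₀^2*(w 0 0)^2*(y 0 1)*(y 1 1) + (2)*(j 0 0)^2*(j 0 1)*s*x₀^2*y₀^2*(w 0 0)*(w 0 1)*(y 0 0)*(y 1 0) + (-2)*(j 0 0)^2*(j 0 1)*s*x₀^2*y₀^2*(w 0 0)^2*(y 0 1)*(y 1 0) + (-2)*(j 0 0)^2*(j 0 1)*(j 1 0)*y₀^3*(w 0 1)^2*(y 0 0)^2 + (4)*(j 0 0)^2*(j 0 1)*(j 1 0)*y₀^3*(w 0 0)*(w 0 1)*(y 0 0)*(y 0 1) + (-2)*(j 0 0)^2*(j 0 1)*(j 1 0)*y₀^3*(w 0 0)^2*(y 0 1)^2 + (2)*(j 0 0)^3*s*y₀^2*(w 0 1)^2*(y 0 0)*(y 0 1) + (-2)*(j 0 0)^3*s*y₀^2*(w 0 0)*(w 0 1)*(y 0 1)^2 + (2)*(j 0 0)^3*s*y₀^4*(w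 0 0)*(w 0 1)*(y 0 0)^2 + (-2)*(j 0 0)^3*s*y₀^4*(w 0 0)^2*(y 0 0)*(y 0 1) + (2)*(j 0 0)^3*s*x₀*y₀^2*(w 0 1)^2*(y 0 0)^2 + (-2)*(j 0 0)^3*s*x₀*y₀^2*(w 0 0)^2*(y 0 1)^2 + (2)*(j 0 0)^3*s*x₀^2*y₀^2*(w 0 0)*(w 0 1)*(y 0 0)^2 + (-2)*(j 0 0)^3*s*x₀^2*y₀^2*(w 0 0)^2*(y 0 0)*(y 0 1) + (-1)*(j 0 0)^4*y₀^3*(w 0 1)^2*(y 0 0)^2 + (2)*(j 0 0)^4*y₀^3*(w 0 0)*(w 0 1)*(y 0 0)*(y 0 1) + (-1)*(j 0 0)^4*y₀^3*(w 0 0)^2*(y 0 1)^2 + Δ*(j 0 1)*(j 1 0)*y₀*(w 0 1)^2*(y 0 1)^2 + Δ*(j 0 1)*(j 1 0)*y₀^3*(w 0 1)^2*(y 0 0)^2 + Δ*(j 0 1)*(j 1 0)*y₀^3*(w 0 0)^2*(y 0 1)^2 + Δ*(j 0 1)*(j 1 0)*y₀^5*(w 0 0)^2*(y 0 0)^2 +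 (2)*Δ*(j 0 1)*(j 1 0)*x₀*y₀*(w 0 1)^2*(y 0 0)*(y 0 1) + (2)*Δ*(j 0 1)*(j 1 0)*x₀*y₀*(w 0 0)*(w 0 1)*(y 0 1)^2 + (2)*Δ*(j 0 1)*(j 1 0)*x₀*y₀^3*(w 0 0)*(w 0 1)*(y 0 0)^2 + (2)*Δ*(j 0 1)*(j 1 0)*x₀*y₀^3*(w 0 0)^2*(y 0 0)*(y 0 1) + Δ*(j 0 1)*(j 1 0)*x₀^2*y₀*(w 0 1)^2*(y 0 0)^2 + (4)*Δ*(j 0 1)*(j 1 0)*x₀^2*y₀*(w 0 0)*(w 0 1)*(y 0 0)*(y 0 1) + Δ*(j 0 1)*(j 1 0)*x₀^2*y₀*(w 0 0)^2*(y 0 1)^2 + (2)*Δ*(j 0 1)*(j 1 0)*x₀^2*y₀^3*(w 0 0)^2*(y 0 0)^2 + (2)*Δ*(j 0 1)*(j 1 0)*x₀^3*y₀*(w 0 0)*(w 0 1)*(y 0 0)^2 + (2)*Δ*(j 0 1)*(j 1 0)*x₀^3*y₀*(w 0 0)^2*(y 0 0)*(y 0 1) + Δ*(j 0 1)*(j 1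 0)*x₀^4*y₀*(w 0 0)^2*(y 0 0)^2 + (-1)*Δ*(j 0 1)^2*y₀^3*(w 0 1)^2*(y 1 0)^2 + (2)*Δ*(j 0 1)^2*y₀^3*(w 0 0)*(w 0 1)*(y 1 0)*(y 1 1) + (-1)*Δ*(j 0 1)^2*y₀^3*(w 0 0)^2*(y 1 1)^2 + (-2)*Δ*(j 0 0)*(j 0 1)*y₀^3*(w 0 1)^2*(y 0 0)*(y 1 0) + (2)*Δ*(j 0 0)*(j 0 1)*y₀^3*(w 0 0)*(w 0 1)*(y 0 1)*(y 1 0) + (2)*Δ*(j 0 0)*(j 0 1)*y₀^3*(w 0 0)*(w 0 1)*(y 0 0)*(y 1 1) + (-2)*Δ*(j 0 0)*(j 0 1)*y₀^3*(w 0 0)^2*(y 0 1)*(y 1 1) + Δ*(j 0 0)^2*y₀*(w 0 1)^2*(y 0 1)^2 + (2)*Δ*(j 0 0)^2*y₀^3*(w 0 0)*(w 0 1)*(y 0 0)*(y 0 1) + Δ*(j 0 0)^2*y₀^5*(w 0 0)^2*(y 0 0)^2 + (2)*Δ*(j 0 0)^2*x₀*y₀*(w 0 1)^2*(y 0 0)*(y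 0 1) + (2)*Δ*(j 0 0)^2*x₀*y₀*(w 0 0)*(w 0 1)*(y 0 1)^2 + (2)*Δ*(j 0 0)^2*x₀*y₀^3*(w 0 0)*(w 0 1)*(y 0 0)^2 + (2)*Δ*(j 0 0)^2*x₀*y₀^3*(w 0 0)^2*(y 0 0)*(y 0 1) + Δ*(j 0 0)^2*x₀^2*y₀*(w 0 1)^2*(y 0 0)^2 + (4)*Δ*(j 0 0)^2*x₀^2*y₀*(w 0 0)*(w 0 1)*(y 0 0)*(y 0 1) + Δ*(j 0 0)^2*x₀^2*y₀*(w 0 0)^2*(y 0 1)^2 + (2)*Δ*(j 0 0)^2*x₀^2*y₀^3*(w 0 0)^2*(y 0 0)^2 + (2)*Δ*(j 0 0)^2*x₀^3*y₀*(w 0 0)*(w 0 1)*(y 0 0)^2 + (2)*Δ*(j 0 0)^2*x₀^3*y₀*(w 0 0)^2*(y 0 0)*(y 0 1) + Δ*(j 0 0)^2*x₀^4*y₀*(w 0 0)^2*(y 0 0)^2 + (-1)*Δ^2*y₀*(w 0 1)^2*(y 0 1)^2 + (-2)*Δ^2*y₀^3*(w 0 0)*(w 0 1)*(y 0 0)*(y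 0 1) + (-1)*Δ^2*y₀^5*(w 0 0)^2*(y 0 0)^2 + (-2)*Δ^2*x₀*y₀*(w 0 1)^2*(y 0 0)*(y 0 1) + (-2)*Δ^2*x₀*y₀*(w 0 0)*(w 0 1)*(y 0 1)^2 + (-2)*Δ^2*x₀*y₀^3*(w 0 0)*(w 0 1)*(y 0 0)^2 + (-2)*Δ^2*x₀*y₀^3*(w 0 0)^2*(y 0 0)*(y 0 1) + (-1)*Δ^2*x₀^2*y₀*(w 0 1)^2*(y 0 0)^2 + (-4)*Δ^2*x₀^2*y₀*(w 0 0)*(w 0 1)*(y 0 0)*(y 0 1) + (-1)*Δ^2*x₀^2*y₀*(w 0 0)^2*(y 0 1)^2 + (-2)*Δ^2*x₀^2*y₀^3*(w 0 0)^2*(y 0 0)^2 + (-2)*Δ^2*x₀^3*y₀*(w 0 0)*(w 0 1)*(y 0 0)^2 + (-2)*Δ^2*x₀^3*y₀*(w 0 0)^2*(y 0 0)*(y 0 1) + (-1)*Δ^2*x₀^4*y₀*(w 0 0)^2*(y 0 0)^2)) * hs2 + (((-2)*Δ*(j 0 1)*s*y₀^2*(w 0 1)^2*(y 0 0)*(y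 1 1) + (2)*Δ*(j 0 1)*s*y₀^2*(w 0 0)*(w 0 1)*(y 0 1)*(y 1 1) + (-2)*Δ*(j 0 1)*s*y₀^4*(w 0 0)*(w 0 1)*(y 0 0)*(y 1 0) + (2)*Δ*(j 0 1)*s*y₀^4*(w 0 0)^2*(y 0 1)*(y 1 0) + (-2)*Δ*(j 0 1)*s*x₀*y₀^2*(w 0 1)^2*(y 0 0)*(y 1 0) + (2)*Δ*(j 0 1)*s*x₀*y₀^2*(w 0 0)*(w 0 1)*(y 0 1)*(y 1 0) + (-2)*Δ*(j 0 1)*s*x₀*y₀^2*(w 0 0)*(w 0 1)*(y 0 0)*(y 1 1) + (2)*Δ*(j 0 1)*s*x₀*y₀^2*(w 0 0)^2*(y 0 1)*(y 1 1) + (-2)*Δ*(j 0 1)*s*x₀^2*y₀^2*(w 0 0)*(w 0 1)*(y 0 0)*(y 1 0) + (2)*Δ*(j 0 1)*s*x₀^2*y₀^2*(w 0 0)^2*(y 0 1)*(y 1 0) + Δ*(j 0 1)*(j 1 0)*y₀^3*(w 0 1)^2*(y 0 0)^2 + (-2)*Δ*(j 0 1)*(j 1 0)*y₀^3*(w 0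 0)*(w 0 1)*(y 0 0)*(y 0 1) + Δ*(j 0 1)*(j 1 0)*y₀^3*(w 0 0)^2*(y 0 1)^2 + (-2)*Δ*(j 0 0)*s*y₀^2*(w 0 1)^2*(y 0 0)*(y 0 1) + (2)*Δ*(j 0 0)*s*y₀^2*(w 0 0)*(w 0 1)*(y 0 1)^2 + (-2)*Δ*(j 0 0)*s*y₀^4*(w 0 0)*(w 0 1)*(y 0 0)^2 + (2)*Δ*(j 0 0)*s*y₀^4*(w 0 0)^2*(y 0 0)*(y 0 1) + (-2)*Δ*(j 0 0)*s*x₀*y₀^2*(w 0 1)^2*(y 0 0)^2 + (2)*Δ*(j 0 0)*s*x₀*y₀^2*(w 0 0)^2*(y 0 1)^2 + (-2)*Δ*(j 0 0)*s*x₀^2*y₀^2*(w 0 0)*(w 0 1)*(y 0 0)^2 + (2)*Δ*(j 0 0)*s*x₀^2*y₀^2*(w 0 0)^2*(y 0 0)*(y 0 1) + Δ*(j 0 0)^2*y₀^3*(w 0 1)^2*(y 0 0)^2 + (-2)*Δ*(j 0 0)^2*y₀^3*(w 0 0)*(w 0 1)*(y 0 0)*(y 0 1) + Δ*(j 0 0)^2*y₀^3*(w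 0 0)^2*(y 0 1)^2 + (-1)*Δ^2*y₀*(w 0 1)^2*(y 0 1)^2 + (-2)*Δ^2*y₀^3*(w 0 0)*(w 0 1)*(y 0 0)*(y 0 1) + (-1)*Δ^2*y₀^5*(w 0 0)^2*(y 0 0)^2 + (-2)*Δ^2*x₀*y₀*(w 0 1)^2*(y 0 0)*(y 0 1) + (-2)*Δ^2*x₀*y₀*(w 0 0)*(w 0 1)*(y 0 1)^2 + (-2)*Δ^2*x₀*y₀^3*(w 0 0)*(w 0 1)*(y 0 0)^2 + (-2)*Δ^2*x₀*y₀^3*(w 0 0)^2*(y 0 0)*(y 0 1) + (-1)*Δ^2*x₀^2*y₀*(w 0 1)^2*(y 0 0)^2 + (-4)*Δ^2*x₀^2*y₀*(w 0 0)*(w 0 1)*(y 0 0)*(y 0 1) + (-1)*Δ^2*x₀^2*y₀*(w 0 0)^2*(y 0 1)^2 + (-2)*Δ^2*x₀^2*y₀^3*(w 0 0)^2*(y 0 0)^2 + (-2)*Δ^2*x₀^3*y₀*(w 0 0)*(w 0 1)*(y 0 0)^2 + (-2)*Δ^2*x₀^3*y₀*(w 0 0)^2*(y 0 0)*(y 0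 1) + (-1)*Δ^2*x₀^4*y₀*(w 0 0)^2*(y 0 0)^2)) * hq
  -- evaluation of the left-hand side
  have hyinv : y⁻¹ = (Matrix.det y)⁻¹ • !![y 1 1, -(y 0 1); -(y 1 0), y 0 0] := by
    rw [Matrix.inv_def, Matrix.adjugate_fin_two, Ring.inverse_eq_inv]
  have hy' : y 0 0 * y 1 1 - y 0 1 * y 1 0 ≠ 0 := by
    rw [Matrix.det_fin_two] at hy; exact hy
  have lem1 : Ro x₀ y₀ (t • (y⁻¹ * j * y)) + 2 * Matrix.det (t • (y⁻¹ * j * y))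
      = t^2 * ((-1)*(j 1 0)*(y 0 1)^2 + (-1)*(j 1 0)*y₀^2*(y 0 0)^2 + (-2)*(j 1 0)*x₀*(y 0 0)*(y 0 1) + (-1)*(j 1 0)*x₀^2*(y 0 0)^2 + (j 0 1)*(y 1 1)^2 + (j 0 1)*y₀^2*(y 1 0)^2 + (2)*(j 0 1)*x₀*(y 1 0)*(y 1 1) + (j 0 1)*x₀^2*(y 1 0)^2 + (2)*(j 0 0)*(y 0 1)*(y 1 1) + (2)*(j 0 0)*y₀^2*(y 0 0)*(y 1 0) + (2)*(j 0 0)*x₀*(y 0 1)*(y 1 0) + (2)*(j 0 0)*x₀*(y 0 0)*(y 1 1) + (2)*(j 0 0)*x₀^2*(y 0 0)*(y 1 0))^2 / (2 * (Matrix.det y)^2 * y₀^2) := by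
    rw [hyinv]
    unfold Ro Jmat invol
    simp only [Matrix.det_fin_two, Matrix.trace_fin_two, Matrix.mul_apply, Fin.sum_univ_two,
      Matrix.smul_apply, Matrix.sub_apply, Matrix.one_apply, Matrix.of_apply, Matrix.cons_val',
      Matrix.cons_val_zero, Matrix.cons_val_one, Matrix.head_cons, Matrix.head_fin_const,
      Matrix.empty_val', Matrix.cons_val_fin_one, smul_eq_mul, hj11]
    field_simp
    ring
  -- final assembly
  have final : t^2 * ((-1)*(j 1 0)*(y 0 1)^2 + (-1)*(j 1 0)*y₀^2*(y 0 0)^2 + (-2)*(j 1 0)*x₀*(y 0 0)*(y 0 1) + (-1)*(j 1 0)*x₀^2*(y 0 0)^2 + (j 0 1)*(y 1 1)^2 + (j 0 1)*y₀^2*(y 1 0)^2 + (2)*(j 0 1)*x₀*(y 1 0)*(y 1 1) + (j 0 1)*x₀^2*(y 1 0)^2 + (2)*(j 0 0)*(y 0 1)*(y 1 1) + (2)*(j 0 0)*y₀^2*(y 0 0)*(y 1 0) + (2)*(j 0 0)*x₀*(y 0 1)*(y 1 0) + (2)*(j 0 0)*x₀*(y 0 0)*(y 1 1) + (2)*(j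 0 0)*x₀^2*(y 0 0)*(y 1 0))^2 / (2 * (Matrix.det y)^2 * y₀^2)
      = (2 * t ^ 2 / (|Δ| * Matrix.det y ^ 2))
        * (-2*((Δ/2 * ((w 1 1)*(y 0 0) + (-1)*(w 1 0)*(y 0 1) + (-1)*(w 0 1)*(y 1 0) + (w 0 0)*(y 1 1)))^2 + (s/2 * ((-1)*(j 1 0)*(w 0 1)*(y 0 0) + (j 1 0)*(w 0 0)*(y 0 1) + (j 0 1)*(w 1 1)*(y 1 0) + (-1)*(j 0 1)*(w 1 0)*(y 1 1) + (j 0 0)*(w 1 1)*(y 0 0) + (-1)*(j 0 0)*(w 1 0)*(y 0 1) + (j 0 0)*(w 0 1)*(y 1 0) + (-1)*(j 0 0)*(w 0 0)*(y 1 1)))^2)/(Δ * Matrix.det w) + Δ * Matrix.det y)^2 := by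
    rw [key, hΔ', ← hs2]
    field_simp
  have hcast : ((‖hform Δ j y w‖ : ℝ) : ℂ)^2
      = (((Δ/2 * ((w 1 1)*(y 0 0) + (-1)*(w 1 0)*(y 0 1) + (-1)*(w 0 1)*(y 1 0) + (w 0 0)*(y 1 1)))^2 + (s/2 * ((-1)*(j 1 0)*(w 0 1)*(y 0 0) + (j 1 0)*(w 0 0)*(y 0 1) + (j 0 1)*(w 1 1)*(y 1 0) + (-1)*(j 0 1)*(w 1 0)*(y 1 1) + (j 0 0)*(w 1 1)*(y 0 0) + (-1)*(j 0 0)*(w 1 0)*(y 0 1) + (j 0 0)*(w 0 1)*(y 1 0) + (-1)*(j 0 0)*(w 0 0)*(y 1 1)))^2 : ℝ) : ℂ) := by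
    rw [← Complex.ofReal_pow, habs2]
  rw [hww, hcast, lem1, final]
  push_cast
  ring
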